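/- The Adler–Yamilov map ((x₁,x₂),(y₁,y₂)) ↦ ((u₁,u₂),(v₁,v₂)) with u₁ = y₁ − (α−β)x₁/(1+x₁y₂), u₂ = y₂, v₁ = x₁, v₂ = x₂ + (α−β)y₂/(1+x₁y₂) admits the Lax matrix L(a₁,a₂;c) = [[a₁a₂ + c − ζ, a₁],[a₂, 1]]: for all ζ ∈ ℂ, L(u₁,u₂;α)·L(v₁,v₂;β) = L(y₁,y₂;β)·L(x₁,x₂;α). -/

import Mathlib

open Matrix

/-- Lax matrix for the Adler–Yamilov map. -/
noncomputable def ayLax (a₁ a₂ c ζ : ℂ) : Matrix (Fin 2) (Fin 2) ℂ :=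
  !![a₁ * a₂ + c - ζ, a₁; a₂, 1]

theorem stmt_14 (α β x₁ x₂ y₁ y₂ : ℂ) (h : 1 + x₁ * y₂ ≠ 0)
    (u₁ u₂ v₁ v₂ : ℂ)
    (hu₁ : u₁ = y₁ - (α - β) * x₁ / (1 + x₁ * y₂)) (hu₂ : u₂ = y₂)
    (hv₁ : v₁ = x₁) (hv₂ : v₂ = x₂ + (α - β) * y₂ / (1 + x₁ * y₂)) :
    ∀ ζ : ℂ, ayLax u₁ u₂ α ζ * ayLax v₁ v₂ β ζ = ayLax y₁ y₂ β ζ * ayLax x₁ x₂ α ζ := by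
  intro ζ
  subst hu₁ hu₂ hv₁ hv₂
  have h' := h
  rw [mul_comm] at h'
  unfold ayLax
  ext i j
  fin_cases i <;> fin_cases j <;>
    simp [Matrix.mul_apply, Fin.sum_univ_two] <;>
    field_simp <;> ring
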